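/- There is no nonempty finite graph G such that every vertex has degree exactly n and, for every vertex v, the neighborhood of v (the subgraph induced on the set of neighbors of v) contains exactly n(n-1)/2 - p_v edges for some integer p_v with 1 ≤ p_v < n/2 (where p_v may depend on v). -/

import Mathlib

open Finset

/-- Lemma on dense neighborhoods: there is no nonempty finite graph in which every
vertex has degree `n` and the neighborhood of each vertex `v` has exactly
`n(n-1)/2 - p_v` edges with `1 ≤ p_v < n/2`. -/
theorem stmt0 (n : ℕ) :
    ¬ ∃ (V : Type) (_ : Fintype V) (_ : Nonempty V) (G : SimpleGraph V),
        (∀ v : V, Nat.card (G.neighborSet v) = n) ∧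
        (∀ v : V, ∃ p : ℕ, 1 ≤ p ∧ 2 * p < n ∧
          Nat.card (G.induce (G.neighborSet v)).edgeSet = n * (n - 1) / 2 - p) := by
  rintro ⟨V, _, ⟨v0⟩, G, hdeg, hp⟩
  classical
  obtain ⟨p0, hp01, hp02, -⟩ := hp v0
  have hn3 : 3 ≤ n := by omega
  set B : V → Finset V := fun v => G.neighborFinset v with hBdef
  have hBmem : ∀ v w : V, w ∈ B v ↔ G.Adj v w := by
    intro v w
    simp [hBdef]
  have hBcard : ∀ v, (B v).card = n := by
    intro v
    have h1 : (B v).card = Fintype.card (G.neighborSet v) := Set.toFinset_card _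
    rw [h1, ← Nat.card_eq_fintype_card, hdeg v]
  -- complement degree within the neighborhood of v
  set cdeg : V → V → ℕ :=
    fun v u => ((B v).filter fun w => ¬(w = u ∨ G.Adj u w)).card with hcdef
  have hcd : ∀ v u, cdeg v u = ((B v).filter fun w => ¬(w = u ∨ G.Adj u w)).card :=
    fun _ _ => rfl
  -- key counting fact
  have key : ∀ v : V, ∃ p : ℕ, 1 ≤ p ∧ 2 * p < n ∧ ∑ u ∈ B v, cdeg v u = 2 * p := by
    intro v
    obtain ⟨p, hp1, hp2, hpe⟩ := hp v
    refine ⟨p, hp1, hp2, ?_⟩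
    set W : Set V := G.neighborSet v with hW
    set H : SimpleGraph W := G.induce W with hH
    have hWn : Fintype.card W = n := by rw [← Nat.card_eq_fintype_card, hdeg v]
    have hHE : H.edgeFinset.card = n * (n - 1) / 2 - p := by
      rw [SimpleGraph.edgeFinset_card, ← Nat.card_eq_fintype_card, hpe]
    have hq2 : 2 * (n * (n - 1) / 2) = n * (n - 1) := by
      have h : Even (n * (n - 1)) := by
        rcases Nat.even_or_odd n with h | h
        · exact h.mul_right _
        · exact Even.mul_left (Nat.Odd.sub_odd h odd_one) _
      obtain ⟨k, hk⟩ := h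
      omega
    have hpq : p ≤ n * (n - 1) / 2 := by
      have h1 : n * 2 ≤ n * (n - 1) := Nat.mul_le_mul_left n (by omega)
      omega
    -- the complement of H has exactly p edges
    have hsum : H.edgeFinset.card + Hᶜ.edgeFinset.card = n.choose 2 := by
      have htop : (H ⊔ Hᶜ) = (⊤ : SimpleGraph W) := sup_compl_eq_top
      have hun : H.edgeFinset ∪ Hᶜ.edgeFinset = (⊤ : SimpleGraph W).edgeFinset := by
        ext e
        simp only [mem_union, SimpleGraph.mem_edgeFinset, ← Set.mem_union,
          ← SimpleGraph.edgeSet_sup, htop]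
      rw [← card_union_of_disjoint (SimpleGraph.disjoint_edgeFinset.2 disjoint_compl_right),
        hun, SimpleGraph.card_edgeFinset_top_eq_card_choose_two, hWn]
    have hHcE : Hᶜ.edgeFinset.card = p := by
      rw [Nat.choose_two_right] at hsum
      omega
    have hhs : ∑ x : W, Hᶜ.degree x = 2 * p := by
      rw [SimpleGraph.sum_degrees_eq_twice_card_edges, hHcE]
    have hHadj : ∀ x y : W, H.Adj x y ↔ G.Adj (x : V) (y : V) := fun x y => Iff.rfl
    have hdegeq : ∀ x : W, Hᶜ.degree x = cdeg v (x : V) := by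
      intro x
      have h0 : Hᶜ.degree x = (Hᶜ.neighborFinset x).card := rfl
      rw [h0, hcd]
      refine Finset.card_bij (fun (y : W) _ => (y : V)) ?_ ?_ ?_
      · intro y hy
        rw [SimpleGraph.mem_neighborFinset, SimpleGraph.compl_adj] at hy
        rw [mem_filter]
        refine ⟨(hBmem v y).2 y.2, ?_⟩
        push_neg
        constructor
        · intro h; exact hy.1 (Subtype.ext h.symm)
        · intro h; exact hy.2 ((hHadj x y).2 h)
      · intro y _ z _ h
        exact Subtype.ext h
      · intro w hw
        rw [mem_filter] at hw
        push_neg at hw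
        obtain ⟨hw1, hw2, hw3⟩ := hw
        refine ⟨⟨w, (hBmem v w).1 hw1⟩, ?_, rfl⟩
        rw [SimpleGraph.mem_neighborFinset, SimpleGraph.compl_adj]
        constructor
        · intro h; exact hw2 (congrArg Subtype.val h).symm
        · intro h; exact hw3 ((hHadj x _).1 h)
    have hbij : ∑ x : W, Hᶜ.degree x = ∑ u ∈ B v, cdeg v u := by
      refine Finset.sum_bij (fun (x : W) _ => (x : V)) ?_ ?_ ?_ ?_
      · intro x _
        exact (hBmem v x).2 x.2
      · intro x _ y _ h
        exact Subtype.ext h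
      · intro u hu
        exact ⟨⟨u, (hBmem v u).1 hu⟩, mem_univ _, rfl⟩
      · intro x _
        exact hdegeq x
    rw [← hbij, hhs]
  -- closed neighborhoods
  set Nc : V → Finset V := fun u => insert u (B u) with hNcdef
  have hNcmem : ∀ u w : V, w ∈ Nc u ↔ (w = u ∨ G.Adj u w) := by
    intro u w; simp [hNcdef, hBmem]
  have hNccard : ∀ u, (Nc u).card = n + 1 := by
    intro u
    have hnm : u ∉ B u := by simp [hBdef]
    show (insert u (B u)).card = n + 1
    rw [card_insert_of_notMem hnm, hBcard]
  -- cdeg = 0 iff same closed neighborhood, for u ∈ B v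
  have hiso : ∀ v u, u ∈ B v → (cdeg v u = 0 ↔ Nc u = Nc v) := by
    intro v u hu
    constructor
    · intro h0
      have hall : ∀ w ∈ B v, w = u ∨ G.Adj u w := by
        intro w hw
        by_contra hc
        have : w ∈ (B v).filter fun w => ¬(w = u ∨ G.Adj u w) :=
          mem_filter.2 ⟨hw, hc⟩
        rw [hcd, card_eq_zero] at h0
        rw [h0] at this
        exact absurd this (notMem_empty w)
      have hsub : Nc v ⊆ Nc u := by
        intro w hw
        rcases (hNcmem v w).1 hw with h | hadj
        · rw [h]
          exact (hNcmem u v).2 (Or.inr (((hBmem v u).1 hu).symm))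
        · rcases hall w ((hBmem v w).2 hadj) with h | h
          · rw [h]
            exact (hNcmem u u).2 (Or.inl rfl)
          · exact (hNcmem u w).2 (Or.inr h)
      exact (eq_of_subset_of_card_le hsub (by rw [hNccard, hNccard])).symm
    · intro hNc
      rw [hcd, card_eq_zero, filter_eq_empty_iff]
      intro w hw
      have hthis : w ∈ Nc u := by
        rw [hNc]
        exact (hNcmem v w).2 (Or.inr ((hBmem v w).1 hw))
      rw [hNcmem] at hthis
      exact not_not_intro hthis
  set K : V → Finset V := fun v => (B v).filter fun u => ¬ (Nc u = Nc v) with hKdef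
  have hKd : ∀ v, K v = (B v).filter fun u => ¬ (Nc u = Nc v) := fun _ => rfl
  -- classes
  set Cl : V → Finset V := fun v => univ.filter fun u => Nc u = Nc v with hCldef
  have hClmem : ∀ v u, u ∈ Cl v ↔ Nc u = Nc v := by
    intro v u; simp [hCldef]
  have hClcard : ∀ v, (Cl v).card + (K v).card = n + 1 := by
    intro v
    have hCl : Cl v = insert v ((B v).filter fun u => Nc u = Nc v) := by
      ext u
      rw [hClmem, mem_insert, mem_filter]
      constructor
      · intro h
        rcases eq_or_ne u v with rfl | hne
        · exact Or.inl rfl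
        · refine Or.inr ⟨?_, h⟩
          have : u ∈ Nc u := (hNcmem u u).2 (Or.inl rfl)
          rw [h, hNcmem] at this
          rcases this with h' | h'
          · exact absurd h' hne
          · exact (hBmem v u).2 h'
      · rintro (rfl | ⟨-, h⟩)
        · rfl
        · exact h
    have hvB : v ∉ B v := by simp [hBdef]
    have hv : v ∉ (B v).filter fun u => Nc u = Nc v := by
      intro h
      exact hvB (mem_of_mem_filter v h)
    rw [hCl, card_insert_of_notMem hv, hKd]
    have heq : ((B v).filter fun u => ¬ (Nc u = Nc v))
        = (B v).filter fun u => ¬ ((fun u => Nc u = Nc v) u) := rfl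
    have hfc := card_filter_add_card_filter_not (s := B v)
      (p := fun u => Nc u = Nc v)
    rw [hBcard, ← heq] at hfc
    omega
  -- every vertex of K v has cdeg ≥ 1
  have hK1 : ∀ v u, u ∈ K v → 1 ≤ cdeg v u := by
    intro v u hu
    rw [hKd, mem_filter] at hu
    have h := (not_iff_not.2 (hiso v u hu.1)).2 hu.2
    omega
  -- K v is small: card (K v) ≤ 2 p_v ≤ n - 1, so every class has ≥ 2 elements
  have hCl2 : ∀ v, 2 ≤ (Cl v).card := by
    intro v
    obtain ⟨p, hp1, hp2, hps⟩ := key v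
    have h1 : (K v).card * 1 ≤ ∑ u ∈ K v, cdeg v u :=
      card_nsmul_le_sum _ _ _ (hK1 v)
    have h2 : ∑ u ∈ K v, cdeg v u ≤ ∑ u ∈ B v, cdeg v u :=
      sum_le_sum_of_subset (filter_subset _ _)
    have := hClcard v
    omega
  -- every vertex of K v has cdeg ≥ 2
  have hK2 : ∀ v u, u ∈ K v → 2 ≤ cdeg v u := by
    intro v u hu
    have h1 := hK1 v u hu
    rw [hKd, mem_filter] at hu
    obtain ⟨huB, huNc⟩ := hu
    -- get a non-neighbor y of u in B v
    have hne : ((B v).filter fun w => ¬(w = u ∨ G.Adj u w)).Nonempty := by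
      rw [← card_pos, ← hcd]
      omega
    obtain ⟨y, hy⟩ := hne
    rw [mem_filter] at hy
    obtain ⟨hyB, hyn⟩ := hy
    push_neg at hyn
    obtain ⟨hyu, hyadj⟩ := hyn
    have hyNc : ¬ (Nc y = Nc v) := by
      intro h
      have : u ∈ Nc y := by
        rw [h, hNcmem]
        exact Or.inr ((hBmem v u).1 huB)
      rw [hNcmem] at this
      rcases this with h' | h'
      · exact hyu h'.symm
      · exact hyadj h'.symm
    -- the whole class of y consists of non-neighbors of u in B v
    have hsub : Cl y ⊆ (B v).filter fun w => ¬(w = u ∨ G.Adj u w) := by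
      intro z hz
      rw [hClmem] at hz
      have hzv : z ≠ v := by
        rintro rfl
        exact hyNc hz.symm
      have hzB : z ∈ B v := by
        have : v ∈ Nc z := by
          rw [hz, hNcmem]
          exact Or.inr (((hBmem v y).1 hyB).symm)
        rw [hNcmem] at this
        rcases this with h' | h'
        · exact absurd h'.symm hzv
        · exact (hBmem v z).2 h'.symm
      have hunotin : u ∉ Nc z := by
        rw [hz, hNcmem]
        push_neg
        exact ⟨fun h => hyu h.symm, fun h => hyadj h.symm⟩
      rw [hNcmem] at hunotin
      push_neg at hunotin
      rw [mem_filter]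
      push_neg
      exact ⟨hzB, fun h => hunotin.1 h.symm, fun h => hunotin.2 (G.adj_symm h)⟩
    have h2 := card_le_card hsub
    have h3 := hCl2 y
    rw [hcd]
    omega
  -- hence card (K v) ≤ p_v, so 2 * card (Cl v) ≥ n + 3
  have hClbig : ∀ v, n + 3 ≤ 2 * (Cl v).card := by
    intro v
    obtain ⟨p, hp1, hp2, hps⟩ := key v
    have h1 : (K v).card * 2 ≤ ∑ u ∈ K v, cdeg v u :=
      card_nsmul_le_sum _ _ _ (hK2 v)
    have h2 : ∑ u ∈ K v, cdeg v u ≤ ∑ u ∈ B v, cdeg v u :=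
      sum_le_sum_of_subset (filter_subset _ _)
    have := hClcard v
    omega
  -- final contradiction
  obtain ⟨p, hp1, hp2, hps⟩ := key v0
  have hKne : (K v0).Nonempty := by
    by_contra h
    rw [not_nonempty_iff_eq_empty, hKd, filter_eq_empty_iff] at h
    have : ∑ u ∈ B v0, cdeg v0 u = 0 := by
      refine Finset.sum_eq_zero ?_
      intro u hu
      have := h hu
      push_neg at this
      exact (hiso v0 u hu).2 this
    omega
  obtain ⟨x, hx⟩ := hKne
  rw [hKd, mem_filter] at hx
  obtain ⟨hxB, hxNc⟩ := hx
  -- Cl v0 ⊆ B x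
  have hsub1 : Cl v0 ⊆ B x := by
    intro z hz
    rw [hClmem] at hz
    have hzx : z ≠ x := by
      rintro rfl
      exact hxNc hz
    have : x ∈ Nc z := by
      rw [hz, hNcmem]
      exact Or.inr ((hBmem v0 x).1 hxB)
    rw [hNcmem] at this
    rcases this with h' | h'
    · exact absurd h'.symm hzx
    · exact (hBmem x z).2 h'.symm
  -- Cl x \ {x} ⊆ B x
  have hsub2 : Cl x \ {x} ⊆ B x := by
    intro z hz
    rw [mem_sdiff, mem_singleton] at hz
    obtain ⟨hz1, hz2⟩ := hz
    rw [hClmem] at hz1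
    have : z ∈ Nc x := by
      rw [← hz1, hNcmem]
      exact Or.inl rfl
    rw [hNcmem] at this
    rcases this with h' | h'
    · exact absurd h' hz2
    · exact (hBmem x z).2 h'
  have hdisj : Disjoint (Cl v0) (Cl x \ {x}) := by
    rw [disjoint_left]
    intro z hz1 hz2
    rw [hClmem] at hz1
    have hz2' : Nc z = Nc x := (hClmem x z).1 (mem_sdiff.1 hz2).1
    exact hxNc (hz2'.symm.trans hz1)
  have hunion : (Cl v0).card + (Cl x \ {x}).card ≤ n := by
    rw [← card_union_of_disjoint hdisj, ← hBcard x]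
    exact card_le_card (union_subset hsub1 hsub2)
  have hcx : (Cl x).card ≤ (Cl x \ {x}).card + 1 := by
    have : x ∈ Cl x := (hClmem x x).2 rfl
    rw [card_sdiff_of_subset (by simpa using this), card_singleton]
    have : 1 ≤ (Cl x).card := card_pos.2 ⟨x, this⟩
    omega
  have h1 := hClbig v0
  have h2 := hClbig x
  omega
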